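/- Let $(r,m,l)$ be a representation of a Leibniz triple system $\mathfrak{L}$ on $V$. A linear map $T:V\to\mathfrak{L}$ is a relative Rota-Baxter operator if and only if the linear map $\widetilde{T}:\mathfrak{L}\oplus V\to\mathfrak{L}\oplus V$ defined by $\widetilde{T}(x+u)=x+Tu$ is a Nijenhuis operator on the semidirect product Leibniz triple system. -/
import Mathlib


def IsTrilin (K : Type*) [Field K] {L M : Type*} [AddCommGroup L] [Module K L]
    [AddCommGroup M] [Module K M] (t : L → L → L → M) : Prop :=
  (∀ y z, IsLinearMap K fun x => t x y z) ∧ (∀ x z, IsLinearMap K fun y => t x y z) ∧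
    (∀ x y, IsLinearMap K fun z => t x y z)

def LTSIdent {L : Type*} [AddCommGroup L] (t : L → L → L → L) : Prop :=
  (∀ a b c d e, t a b (t c d e) =
      t (t a b c) d e - t (t a b d) c e - t (t a b e) c d + t (t a b e) d c) ∧
  (∀ a b c d e, t a (t b c d) e =
      t (t a b c) d e - t (t a c b) d e - t (t a d b) c e + t (t a d c) b e)

def IsLTS (K : Type*) [Field K] {L : Type*} [AddCommGroup L] [Module K L]
    (t : L → L → L → L) : Prop := IsTrilin K t ∧ LTSIdent t

def sd {L V : Type*} [AddCommGroup L] [AddCommGroup V]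
    (t : L → L → L → L) (l m r : L → L → V → V) :
    L × V → L × V → L × V → L × V :=
  fun p q s => (t p.1 q.1 s.1, l p.1 q.1 s.2 + m p.1 s.1 q.2 + r q.1 s.1 p.2)

def IsRep (K : Type*) [Field K] {L V : Type*} [AddCommGroup L] [Module K L]
    [AddCommGroup V] [Module K V] (t : L → L → L → L) (l m r : L → L → V → V) : Prop :=
  IsLTS K (sd t l m r)

def IsRRB {K : Type*} [Field K] {L V : Type*} [AddCommGroup L] [Module K L]
    [AddCommGroup V] [Module K V] (t : L → L → L → L) (l m r : L → L → V → V)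
    (T : V →ₗ[K] L) : Prop :=
  ∀ u v w, t (T u) (T v) (T w) =
    T (l (T u) (T v) w + m (T u) (T w) v + r (T v) (T w) u)

def IsRB {K : Type*} [Field K] {L : Type*} [AddCommGroup L] [Module K L]
    (t : L → L → L → L) (R : L →ₗ[K] L) : Prop :=
  ∀ x y z, t (R x) (R y) (R z) =
    R (t (R x) (R y) z + t (R x) y (R z) + t x (R y) (R z))

def IsNij {K : Type*} [Field K] {A : Type*} [AddCommGroup A] [Module K A]
    (t : A → A → A → A) (N : A →ₗ[K] A) : Prop :=
  ∀ x y z, t (N x) (N y) (N z) =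
    N (t (N x) (N y) z) + N (t x (N y) (N z)) + N (t (N x) y (N z))
      - N (N (t (N x) y z)) - N (N (t x (N y) z)) - N (N (t x y (N z)))
      + N (N (N (t x y z)))

theorem stmt5 {K : Type*} [Field K] {L V : Type*} [AddCommGroup L] [Module K L]
    [AddCommGroup V] [Module K V]
    (t : L → L → L → L) (l m r : L → L → V → V)
    (hL : IsLTS K t) (hrep : IsRep K t l m r) (T : V →ₗ[K] L) :
    IsRRB t l m r T ↔
      IsNij (sd t l m r)
        ((LinearMap.fst K L V + T ∘ₗ LinearMap.snd K L V).prod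
          (0 : L × V →ₗ[K] V)) := by
  obtain ⟨⟨H1, H2, H3⟩, -⟩ := hrep
  set N : L × V →ₗ[K] L × V :=
    (LinearMap.fst K L V + T ∘ₗ LinearMap.snd K L V).prod (0 : L × V →ₗ[K] V) with hNdef
  have hN : ∀ e : L × V, N e = (e.1 + T e.2, 0) := by
    intro e; rw [hNdef]; rfl
  have hNN : ∀ e, N (N e) = N e := by
    intro e; rw [hN, hN]; simp
  have b1a : ∀ p p' q s, sd t l m r (p + p') q s = sd t l m r p q s + sd t l m r p' q s :=
    fun p p' q s => (H1 q s).map_add p p'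
  have b2a : ∀ p q q' s, sd t l m r p (q + q') s = sd t l m r p q s + sd t l m r p q' s :=
    fun p q q' s => (H2 p s).map_add q q'
  have b3a : ∀ p q s s', sd t l m r p q (s + s') = sd t l m r p q s + sd t l m r p q s' :=
    fun p q s s' => (H3 p q).map_add s s'
  have b1z : ∀ q s, sd t l m r 0 q s = 0 := fun q s => (H1 q s).map_zero
  have b2z : ∀ p s, sd t l m r p 0 s = 0 := fun p s => (H2 p s).map_zero
  have b3z : ∀ p q, sd t l m r p q 0 = 0 := fun p q => (H3 p q).map_zero
  have b1n : ∀ p q s, sd t l m r (-p) q s = -sd t l m r p q s :=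
    fun p q s => (H1 q s).map_neg p
  have b2n : ∀ p q s, sd t l m r p (-q) s = -sd t l m r p q s :=
    fun p q s => (H2 p s).map_neg q
  have b3n : ∀ p q s, sd t l m r p q (-s) = -sd t l m r p q s :=
    fun p q s => (H3 p q).map_neg s
  have Z1 : ∀ (β γ : L) (ν ω : V), l 0 β ω + m 0 γ ν + r β γ 0 = 0 := by
    intro β γ ν ω
    simpa [sd] using congrArg Prod.snd (b1z (β, ν) (γ, ω))
  have Z2 : ∀ (α γ : L) (υ ω : V), l α 0 ω + m α γ 0 + r 0 γ υ = 0 := by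
    intro α γ υ ω
    simpa [sd] using congrArg Prod.snd (b2z (α, υ) (γ, ω))
  have Z3 : ∀ (α β : L) (υ ν : V), l α β 0 + m α 0 ν + r β 0 υ = 0 := by
    intro α β υ ν
    simpa [sd] using congrArg Prod.snd (b3z (α, υ) (β, ν))
  have eps : ∀ α β γ : L, l α β 0 + m α γ 0 + r β γ 0 = 0 := by
    intro α β γ
    have comb : l α β 0 + m α γ 0 + r β γ 0 =
        (l α β 0 + m α 0 0 + r β 0 0) + (l α 0 0 + m α γ 0 + r 0 γ 0)
          + (l 0 β 0 + m 0 γ 0 + r β γ 0)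
          - (l α 0 0 + m α 0 0 + r 0 0 0) - (l 0 β 0 + m 0 0 0 + r β 0 0)
          - (l 0 0 0 + m 0 γ 0 + r 0 γ 0) + (l 0 0 0 + m 0 0 0 + r 0 0 0) := by abel
    rw [comb, Z3 α β 0 0, Z2 α γ 0 0, Z1 β γ 0 0, Z2 α 0 0 0, Z1 β 0 0 0, Z1 0 γ 0 0,
      Z1 0 0 0 0]
    simp
  have lemA : ∀ α β γ : L, sd t l m r (α, (0:V)) (β, (0:V)) (γ, (0:V)) = (t α β γ, 0) := by
    intro α β γ
    have h : sd t l m r (α, (0:V)) (β, (0:V)) (γ, (0:V))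
        = (t α β γ, l α β 0 + m α γ 0 + r β γ 0) := rfl
    rw [h, eps]
  have lemM : ∀ (α β γ : L) (u v w : V),
      l α β (-w) + m α γ (-v) + r β γ (-u) = -(l α β w + m α γ v + r β γ u) := by
    intro α β γ u v w
    have En3 : l α β (-w) + m α 0 0 + r β 0 0 = -(l α β w + m α 0 0 + r β 0 0) := by
      simpa [sd] using congrArg Prod.snd (b3n (α, (0:V)) (β, (0:V)) ((0:L), w))
    have En2 : l α 0 0 + m α γ (-v) + r 0 γ 0 = -(l α 0 0 + m α γ v + r 0 γ 0) := by
      simpa [sd] using congrArg Prod.snd (b2n (α, (0:V)) ((0:L), v) (γ, (0:V)))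
    have En1 : l 0 β 0 + m 0 γ 0 + r β γ (-u) = -(l 0 β 0 + m 0 γ 0 + r β γ u) := by
      simpa [sd] using congrArg Prod.snd (b1n ((0:L), u) (β, (0:V)) (γ, (0:V)))
    have z3 : (l α β (-w) + m α 0 0 + r β 0 0) - -(l α β w + m α 0 0 + r β 0 0) = 0 := by
      rw [En3]; simp
    have z2 : (l α 0 0 + m α γ (-v) + r 0 γ 0) - -(l α 0 0 + m α γ v + r 0 γ 0) = 0 := by
      rw [En2]; simp
    have z1 : (l 0 β 0 + m 0 γ 0 + r β γ (-u)) - -(l 0 β 0 + m 0 γ 0 + r β γ u) = 0 := by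
      rw [En1]; simp
    rw [← sub_eq_zero]
    have comb : l α β (-w) + m α γ (-v) + r β γ (-u) - -(l α β w + m α γ v + r β γ u) =
        ((l α β (-w) + m α 0 0 + r β 0 0) - -(l α β w + m α 0 0 + r β 0 0))
        + ((l α 0 0 + m α γ (-v) + r 0 γ 0) - -(l α 0 0 + m α γ v + r 0 γ 0))
        + ((l 0 β 0 + m 0 γ 0 + r β γ (-u)) - -(l 0 β 0 + m 0 γ 0 + r β γ u))
        - ((l α 0 0 + m α 0 0 + r 0 0 0) + (l α 0 0 + m α 0 0 + r 0 0 0))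
        - ((l 0 β 0 + m 0 0 0 + r β 0 0) + (l 0 β 0 + m 0 0 0 + r β 0 0))
        - ((l 0 0 0 + m 0 γ 0 + r 0 γ 0) + (l 0 0 0 + m 0 γ 0 + r 0 γ 0))
        + ((l 0 0 0 + m 0 0 0 + r 0 0 0) + (l 0 0 0 + m 0 0 0 + r 0 0 0)) := by abel
    rw [comb, z3, z2, z1, eps α 0 0, eps 0 β 0, eps 0 0 γ, eps 0 0 0]
    simp
  have val : ∀ u v w : V,
      N (sd t l m r (T u, -u) (T v, -v) (T w, -w)) =
        (t (T u) (T v) (T w)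
          - T (l (T u) (T v) w + m (T u) (T w) v + r (T v) (T w) u), 0) := by
    intro u v w
    have e1 : sd t l m r (T u, -u) (T v, -v) (T w, -w) =
        (t (T u) (T v) (T w),
          l (T u) (T v) (-w) + m (T u) (T w) (-v) + r (T v) (T w) (-u)) := rfl
    rw [e1, lemM, hN]
    simp [sub_eq_add_neg]
  have main : ∀ p q s : L × V,
      (sd t l m r (N p) (N q) (N s) =
        N (sd t l m r (N p) (N q) s) + N (sd t l m r p (N q) (N s))
          + N (sd t l m r (N p) q (N s))
          - N (N (sd t l m r (N p) q s)) - N (N (sd t l m r p (N q) s))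
          - N (N (sd t l m r p q (N s)))
          + N (N (N (sd t l m r p q s)))) ↔
      N (sd t l m r (T p.2, -p.2) (T q.2, -q.2) (T s.2, -s.2)) = 0 := by
    intro p q s
    have hdp : ∀ e : L × V, N e = e + ((T e.2, -e.2) : L × V) := by
      intro e; rw [hN]; exact Prod.ext_iff.mpr ⟨by simp, by simp⟩
    have hfix : N (sd t l m r (N p) (N q) (N s)) = sd t l m r (N p) (N q) (N s) := by
      rw [hN p, hN q, hN s, lemA, hN]
      exact Prod.ext_iff.mpr ⟨by simp, by simp⟩
    have key : N (sd t l m r (N p) (N q) s) + N (sd t l m r p (N q) (N s))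
          + N (sd t l m r (N p) q (N s))
          - N (N (sd t l m r (N p) q s)) - N (N (sd t l m r p (N q) s))
          - N (N (sd t l m r p q (N s)))
          + N (N (N (sd t l m r p q s))) =
        sd t l m r (N p) (N q) (N s)
          - N (sd t l m r (T p.2, -p.2) (T q.2, -q.2) (T s.2, -s.2)) := by
      conv_rhs => rw [← hfix]
      rw [hdp p, hdp q, hdp s]
      simp only [hNN, b1a, b2a, b3a, map_add]
      abel
    rw [key, eq_sub_iff_add_eq, add_eq_left]
  constructor
  · intro hT p q s
    rw [main p q s, val p.2 q.2 s.2, hT p.2 q.2 s.2]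
    simp
  · intro hNij u v w
    have h0 := (main (0, u) (0, v) (0, w)).1 (hNij (0, u) (0, v) (0, w))
    have h0' : N (sd t l m r (T u, -u) (T v, -v) (T w, -w)) = 0 := h0
    rw [val u v w] at h0'
    have h1 := congrArg Prod.fst h0'
    simp only [Prod.fst_zero] at h1
    exact sub_eq_zero.mp h1
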